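/- Let f be a rational function of one variable. Then applying the product of divided differences ∂₁∂₂⋯∂_{n−1} to f(x₁)·x₂ x₃ ⋯ xₙ yields the symmetric function Σ_{i=1}^{n} f(x_i) ∏_{j≠i} x_j / ∏_{j≠i}(x_i − x_j). -/

import Mathlib

noncomputable section

open scoped BigOperators

namespace Gaudin

variable {R : Type*} [CommRing R]

/-- The generating series `∏_{b∈B}(1-zb) / ∏_{a∈A}(1-za)` of the complete
functions of the formal difference of alphabets `A - B` (the inverse is taken
via `PowerSeries.invOfUnit`, legitimate since the constant coefficient is `1`). -/
def genSeries (A B : Multiset R) : PowerSeries R :=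
  (B.map (fun b => 1 - PowerSeries.C b * PowerSeries.X)).prod *
    PowerSeries.invOfUnit ((A.map (fun a => 1 - PowerSeries.C a * PowerSeries.X)).prod) 1

/-- The complete function `S_m(A-B)`: the coefficient of `z^m` in the generating
series, and `0` for `m < 0`. -/
def Scomp (A B : Multiset R) (m : ℤ) : R :=
  if m < 0 then 0 else PowerSeries.coeff m.toNat (genSeries A B)

/-- The Schur function of index `v ∈ ℕ^p` of the difference of alphabets `A - B`:
`S_v(A-B) = det( S_{v_c + c - ρ}(A-B) )_{ρ,c = 1,…,p}`. -/
def SchurS {p : ℕ} (A B : Multiset R) (v : Fin p → ℕ) : R :=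
  Matrix.det (Matrix.of fun ρ c : Fin p => Scomp A B ((v c : ℤ) + (c : ℤ) - (ρ : ℤ)))

/-- The Vandermonde `Δ(x) = ∏_{i<j} (x_j - x_i)`. -/
def vand {n : ℕ} (x : Fin n → R) : R :=
  ∏ i : Fin n, ∏ j ∈ Finset.Ioi i, (x j - x i)

variable {K : Type*} [Field K]

/-- The Gaudin function of level `r`:
`F^r_n(x,y) = (R(x, y(1+t+⋯+t^r)) / (Δ(x)Δ(y))) · det(1/∏_{k=0}^r (x_i - t^k y_j))`. -/
def gaudinF (n r : ℕ) (t : K) (x y : Fin n → K) : K :=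
  ((∏ i : Fin n, ∏ j : Fin n, ∏ k ∈ Finset.range (r + 1), (x i - t ^ k * y j)) /
      (vand x * vand y)) *
    Matrix.det (Matrix.of fun i j : Fin n =>
      (∏ k ∈ Finset.range (r + 1), (x i - t ^ k * y j))⁻¹)

/-- The alphabet `y(1+t+⋯+t^r) = {y, ty, …, t^r y}` attached to a single letter `y`. -/
def alph1t (r : ℕ) (t yi : K) : Multiset K :=
  (Finset.univ : Finset (Fin (r + 1))).val.map fun k => t ^ (k : ℕ) * yi

/-- The alphabet (multiset) attached to a finite family of letters. -/
def alphOf {n : ℕ} (x : Fin n → K) : Multiset K :=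
  (Finset.univ : Finset (Fin n)).val.map x

/-- The ordinary Schur polynomial `s_λ(x₁,…,xₙ)` in bialternant form. -/
def schurPol {n : ℕ} (lam : Fin n → ℕ) (x : Fin n → K) : K :=
  Matrix.det (Matrix.of fun i j : Fin n => x i ^ (lam j + (n - 1 - (j : ℕ)))) /
    Matrix.det (Matrix.of fun i j : Fin n => x i ^ (n - 1 - (j : ℕ)))

/-- Substitution of variables in a rational function, computed on the reduced
fraction (numerator/denominator), with the usual junk-value convention if the
denominator specializes to zero. -/
def subst {σ : Type*} (g : σ → FractionRing (MvPolynomial σ ℚ))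
    (f : FractionRing (MvPolynomial σ ℚ)) : FractionRing (MvPolynomial σ ℚ) :=
  MvPolynomial.aeval g (IsFractionRing.num (MvPolynomial σ ℚ) f) /
    MvPolynomial.aeval g ((IsFractionRing.den (MvPolynomial σ ℚ) f : MvPolynomial σ ℚ))

/-- Variable indices for the field `ℚ(t, x₁,…,xₙ, y₁,…,yₙ)`. -/
abbrev Vars (n : ℕ) := Unit ⊕ Fin n ⊕ Fin n

/-- The field `ℚ(t, x₁,…,xₙ, y₁,…,yₙ)`. -/
abbrev Kn (n : ℕ) := FractionRing (MvPolynomial (Vars n) ℚ)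

/-- The indeterminate `t`. -/
def tv (n : ℕ) : Kn n :=
  algebraMap (MvPolynomial (Vars n) ℚ) (Kn n) (MvPolynomial.X (Sum.inl ()))

/-- The indeterminates `x₁,…,xₙ`. -/
def xv {n : ℕ} (i : Fin n) : Kn n :=
  algebraMap (MvPolynomial (Vars n) ℚ) (Kn n) (MvPolynomial.X (Sum.inr (Sum.inl i)))

/-- The indeterminates `y₁,…,yₙ`. -/
def yv {n : ℕ} (j : Fin n) : Kn n :=
  algebraMap (MvPolynomial (Vars n) ℚ) (Kn n) (MvPolynomial.X (Sum.inr (Sum.inr j)))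

/-- The action of a permutation `w ∈ S_n` on rational functions, permuting the
`x`-variables (and fixing `t` and the `y`-variables). -/
def permAct {n : ℕ} (w : Equiv.Perm (Fin n)) : Kn n → Kn n :=
  subst (fun v => match v with
    | Sum.inl () => tv n
    | Sum.inr (Sum.inl i) => xv (w i)
    | Sum.inr (Sum.inr j) => yv j)

/-- The Euler–Poincaré symmetrizer
`f ⋃_ω = Σ_{w∈S_n} w( f · ∏_{i<j} (t x_i - x_j)/(x_i - x_j) )`. -/
def Uomega {n : ℕ} (f : Kn n) : Kn n :=
  ∑ w : Equiv.Perm (Fin n), permAct w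
    (f * ∏ i : Fin n, ∏ j ∈ Finset.Ioi i, (tv n * xv i - xv j) / (xv i - xv j))

/-- The divided difference `∂_k` (0-indexed: acting on the pair `x_{k+1}, x_{k+2}`
of the 1-indexed variables), `f ∂ = (f - f^s)/(x_k - x_{k+1})`. -/
def ddOp (n : ℕ) (k : ℕ) (f : Kn n) : Kn n :=
  if h : k + 1 < n then
    (f - permAct (Equiv.swap ⟨k, Nat.lt_of_succ_lt h⟩ ⟨k + 1, h⟩) f) /
      (xv ⟨k, Nat.lt_of_succ_lt h⟩ - xv ⟨k + 1, h⟩)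
  else f

/-- Successive application `g ∂₁ ∂₂ ⋯ ∂_m` (1-indexed) of divided differences. -/
def ddChain (n : ℕ) (g : Kn n) : ℕ → Kn n
  | 0 => g
  | k + 1 => ddOp n k (ddChain n g k)


section Lagrange

variable {K : Type*} [Field K] {ι : Type*} [DecidableEq ι]


/-- Lagrange-type partial sum. -/
def lagA (x F : ι → K) (S : Finset ι) : K :=
  ∑ i ∈ S, F i * (∏ j ∈ S.erase i, x j) / ∏ j ∈ S.erase i, (x i - x j)

lemma lagA_insert (x F : ι → K) (T : Finset ι) (c : ι) (hc : c ∉ T) :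
    lagA x F (insert c T) =
      F c * (∏ j ∈ T, x j) / (∏ j ∈ T, (x c - x j)) +
        ∑ i ∈ T, F i * (x c * ∏ j ∈ T.erase i, x j) /
          ((x i - x c) * ∏ j ∈ T.erase i, (x i - x j)) := by
  rw [lagA, Finset.sum_insert hc, Finset.erase_insert hc]
  congr 1
  refine Finset.sum_congr rfl fun i hi => ?_
  have hic : i ≠ c := fun h => hc (h ▸ hi)
  rw [Finset.erase_insert_of_ne hic.symm, Finset.prod_insert (fun h => hc (Finset.erase_subset _ _ h)),
    Finset.prod_insert (fun h => hc (Finset.erase_subset _ _ h))]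

lemma lagA_key (x F : ι → K) (T : Finset ι) (a b : ι) (ha : a ∉ T) (hb : b ∉ T)
    (hab : a ≠ b) (hxab : x a ≠ x b)
    (hxa : ∀ i ∈ T, x i ≠ x a) (hxb : ∀ i ∈ T, x i ≠ x b) :
    (lagA x F (insert a T) * x b - lagA x F (insert b T) * x a) / (x a - x b) =
      lagA x F (insert a (insert b T)) := by
  have haT : a ∉ insert b T := by simp [hab, ha]
  have hd : x a - x b ≠ 0 := sub_ne_zero.mpr hxab
  rw [lagA_insert x F T a ha, lagA_insert x F T b hb, lagA_insert x F (insert b T) a haT,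
    Finset.prod_insert hb, Finset.prod_insert hb]
  -- expand the sum over `insert b T`
  rw [Finset.sum_insert hb, Finset.erase_insert hb]
  have hsum : ∑ i ∈ T, F i * (x a * ∏ j ∈ (insert b T).erase i, x j) /
      ((x i - x a) * ∏ j ∈ (insert b T).erase i, (x i - x j)) =
      ∑ i ∈ T, F i * (x a * (x b * ∏ j ∈ T.erase i, x j)) /
        ((x i - x a) * ((x i - x b) * ∏ j ∈ T.erase i, (x i - x j))) := by
    refine Finset.sum_congr rfl fun i hi => ?_
    have hib : i ≠ b := fun h => hb (h ▸ hi)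
    rw [Finset.erase_insert_of_ne hib.symm,
      Finset.prod_insert (fun h => hb (Finset.erase_subset _ _ h)),
      Finset.prod_insert (fun h => hb (Finset.erase_subset _ _ h))]
  rw [hsum]
  rw [add_mul, add_mul, Finset.sum_mul, Finset.sum_mul]
  set Pa := ∏ j ∈ T, x j with hPa
  set Da := ∏ j ∈ T, (x a - x j) with hDa
  set Db := ∏ j ∈ T, (x b - x j) with hDb
  rw [add_sub_add_comm, ← Finset.sum_sub_distrib, add_div, Finset.sum_div]
  have h1 : (F a * Pa / Da * x b - F b * Pa / Db * x a) / (x a - x b) =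
      F a * (x b * Pa) / ((x a - x b) * Da) + F b * (x a * Pa) / ((x b - x a) * Db) := by
    have hba : x b - x a ≠ 0 := sub_ne_zero.mpr (Ne.symm hxab)
    rcases eq_or_ne Da 0 with h0 | h0
    · rcases eq_or_ne Db 0 with h0' | h0'
      · simp [h0, h0']
      · rw [h0]; field_simp; ring
    · rcases eq_or_ne Db 0 with h0' | h0'
      · rw [h0']; field_simp; ring
      · field_simp
        ring
  have h2 : ∀ i ∈ T,
      (F i * (x a * ∏ j ∈ T.erase i, x j) /
          ((x i - x a) * ∏ j ∈ T.erase i, (x i - x j)) * x b -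
        F i * (x b * ∏ j ∈ T.erase i, x j) /
          ((x i - x b) * ∏ j ∈ T.erase i, (x i - x j)) * x a) / (x a - x b) =
      F i * (x a * (x b * ∏ j ∈ T.erase i, x j)) /
        ((x i - x a) * ((x i - x b) * ∏ j ∈ T.erase i, (x i - x j))) := by
    intro i hi
    have hia : x i - x a ≠ 0 := sub_ne_zero.mpr (hxa i hi)
    have hib : x i - x b ≠ 0 := sub_ne_zero.mpr (hxb i hi)
    rcases eq_or_ne (∏ j ∈ T.erase i, (x i - x j)) 0 with h0 | h0
    · simp [h0]
    · field_simp
      ring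
  rw [h1, Finset.sum_congr rfl h2]
  ring


lemma lagA_map (x F : ι → K) (φ : K ≃+* K) (w : ι → ι)
    (hw : Function.Injective w) (hx : ∀ j, φ (x j) = x (w j)) (hF : ∀ j, φ (F j) = F (w j))
    (S : Finset ι) : φ (lagA x F S) = lagA x F (S.image w) := by
  rw [lagA, lagA, map_sum, Finset.sum_image (fun a _ b _ h => hw h)]
  refine Finset.sum_congr rfl fun i hi => ?_
  rw [← Finset.image_erase hw, Finset.prod_image (fun a _ b _ h => hw h),
      Finset.prod_image (fun a _ b _ h => hw h), map_div₀, map_mul, hF, map_prod, map_prod]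
  congr 1
  · congr 1
    exact Finset.prod_congr rfl fun j _ => hx j
  · refine Finset.prod_congr rfl fun j _ => ?_
    rw [map_sub, hx, hx]

end Lagrange

section Perm

variable {n : ℕ}

/-- The permutation of the variable indices induced by `w ∈ S_n`. -/
def permVarsEquiv (w : Equiv.Perm (Fin n)) : Vars n ≃ Vars n :=
  (Equiv.refl Unit).sumCongr (w.sumCongr (Equiv.refl (Fin n)))

/-- The field automorphism of `Kn n` induced by `w`. -/
noncomputable def Phi (w : Equiv.Perm (Fin n)) : Kn n ≃+* Kn n :=
  IsFractionRing.ringEquivOfRingEquiv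
    (MvPolynomial.renameEquiv ℚ (permVarsEquiv w)).toRingEquiv

lemma Phi_algebraMap (w : Equiv.Perm (Fin n)) (p : MvPolynomial (Vars n) ℚ) :
    Phi w (algebraMap (MvPolynomial (Vars n) ℚ) (Kn n) p) =
      algebraMap (MvPolynomial (Vars n) ℚ) (Kn n)
        (MvPolynomial.rename (permVarsEquiv w) p) := by
  simp [Phi]

lemma Phi_tv (w : Equiv.Perm (Fin n)) : Phi w (tv n) = tv n := by
  rw [tv, Phi_algebraMap, MvPolynomial.rename_X]
  rfl

lemma Phi_xv (w : Equiv.Perm (Fin n)) (i : Fin n) : Phi w (xv i) = xv (w i) := by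
  rw [xv, Phi_algebraMap, MvPolynomial.rename_X]
  rfl

lemma Phi_yv (w : Equiv.Perm (Fin n)) (j : Fin n) : Phi w (yv j) = yv j := by
  rw [yv, Phi_algebraMap, MvPolynomial.rename_X]
  rfl

lemma permAct_eq_Phi (w : Equiv.Perm (Fin n)) (f : Kn n) : permAct w f = Phi w f := by
  have key : ∀ q : MvPolynomial (Vars n) ℚ,
      MvPolynomial.aeval (fun v : Vars n => match v with
        | Sum.inl () => tv n
        | Sum.inr (Sum.inl i) => xv (w i)
        | Sum.inr (Sum.inr j) => yv j) q =
      Phi w (algebraMap (MvPolynomial (Vars n) ℚ) (Kn n) q) := by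
    have hh : (MvPolynomial.aeval (fun v : Vars n => match v with
        | Sum.inl () => tv n
        | Sum.inr (Sum.inl i) => xv (w i)
        | Sum.inr (Sum.inr j) => yv j) :
          MvPolynomial (Vars n) ℚ →ₐ[ℚ] Kn n).toRingHom =
        ((Phi w : Kn n ≃+* Kn n) : Kn n →+* Kn n).comp
          (algebraMap (MvPolynomial (Vars n) ℚ) (Kn n)) := by
      apply MvPolynomial.ringHom_ext
      · intro r
        exact RingHom.congr_fun
          (Subsingleton.elim
            ((MvPolynomial.aeval (R := ℚ) _).toRingHom.comp (MvPolynomial.C))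
            ((((Phi w : Kn n ≃+* Kn n) : Kn n →+* Kn n).comp
              (algebraMap (MvPolynomial (Vars n) ℚ) (Kn n))).comp (MvPolynomial.C))) r
      · rintro (⟨⟩ | i | j) <;>
          simp [Phi_algebraMap, MvPolynomial.rename_X, permVarsEquiv, tv, xv, yv]
    intro q
    exact RingHom.congr_fun hh q
  rw [permAct, subst, key, key, ← map_div₀, IsFractionRing.mk'_num_den']

lemma Phi_fixed (w : Equiv.Perm (Fin n)) {a : Kn n}
    (ha : a ∈ Subfield.closure ({tv n} ∪ Set.range (yv (n := n)))) : Phi w a = a := by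
  refine RingHom.eqOn_field_closure (f := ((Phi w : Kn n ≃+* Kn n) : Kn n →+* Kn n))
    (g := RingHom.id (Kn n)) ?_ ha
  rintro z (hz | ⟨j, rfl⟩)
  · rcases hz with rfl
    exact Phi_tv w
  · exact Phi_yv w j

lemma xv_injective : Function.Injective (xv (n := n)) := by
  intro i j h
  have h2 := IsFractionRing.injective (MvPolynomial (Vars n) ℚ) (Kn n) h
  have h3 := MvPolynomial.X_injective h2
  simpa using h3

lemma Phi_eval (w : Equiv.Perm (Fin n)) (f : RatFunc (Kn n))
    (hnum : ∀ m : ℕ, f.num.coeff m ∈ Subfield.closure ({tv n} ∪ Set.range (yv (n := n))))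
    (hden : ∀ m : ℕ, f.denom.coeff m ∈ Subfield.closure ({tv n} ∪ Set.range (yv (n := n))))
    (i : Fin n) :
    Phi w (RatFunc.eval (RingHom.id (Kn n)) (xv i) f) =
      RatFunc.eval (RingHom.id (Kn n)) (xv (w i)) f := by
  have key : ∀ p : Polynomial (Kn n),
      (∀ m : ℕ, p.coeff m ∈ Subfield.closure ({tv n} ∪ Set.range (yv (n := n)))) →
      Phi w (p.eval₂ (RingHom.id (Kn n)) (xv i)) = p.eval₂ (RingHom.id (Kn n)) (xv (w i)) := by
    intro p hp
    have h0 : ∀ z : Kn n, Phi w z = ((Phi w : Kn n ≃+* Kn n) : Kn n →+* Kn n) z := fun _ => rfl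
    rw [h0, Polynomial.hom_eval₂ p (RingHom.id (Kn n)) ((Phi w : Kn n ≃+* Kn n) : Kn n →+* Kn n)
      (xv i)]
    have : Phi w (xv i) = xv (w i) := Phi_xv w i
    rw [show (((Phi w : Kn n ≃+* Kn n) : Kn n →+* Kn n)) (xv i) = xv (w i) from this]
    rw [Polynomial.eval₂_eq_sum, Polynomial.eval₂_eq_sum, Polynomial.sum, Polynomial.sum]
    refine Finset.sum_congr rfl fun m _ => ?_
    simp only [RingHom.comp_apply, RingHom.id_apply]
    exact congrArg (· * xv (w i) ^ m) (Phi_fixed w (hp m))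
  rw [RatFunc.eval, RatFunc.eval, map_div₀, key _ hnum, key _ hden]

end Perm


lemma ddOp_eq {n : ℕ} (k : ℕ) (h : k + 1 < n) (g : Kn n) :
    ddOp n k g =
      (g - Phi (Equiv.swap ⟨k, Nat.lt_of_succ_lt h⟩ ⟨k + 1, h⟩) g) /
        (xv ⟨k, Nat.lt_of_succ_lt h⟩ - xv ⟨k + 1, h⟩) := by
  rw [ddOp, dif_pos h, permAct_eq_Phi]

/-- for a rational function `f` of one variable (whose
coefficients do not involve the `x`-variables),
`f(x₁)·x₂⋯xₙ ∂₁∂₂⋯∂_{n-1} = Σ_i f(x_i) ∏_{j≠i} x_j / ∏_{j≠i}(x_i - x_j)`. -/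
theorem divided_differences_lagrange (n : ℕ) (hn : 0 < n) (f : RatFunc (Kn n))
    (hnum : ∀ m : ℕ, f.num.coeff m ∈ Subfield.closure ({tv n} ∪ Set.range (yv (n := n))))
    (hden : ∀ m : ℕ, f.denom.coeff m ∈ Subfield.closure ({tv n} ∪ Set.range (yv (n := n)))) :
    ddChain n
        (RatFunc.eval (RingHom.id (Kn n)) (xv ⟨0, hn⟩) f *
          ∏ i ∈ Finset.univ.erase (⟨0, hn⟩ : Fin n), xv i)
        (n - 1) =
      ∑ i : Fin n, RatFunc.eval (RingHom.id (Kn n)) (xv i) f *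
          (∏ j ∈ Finset.univ.erase i, xv j) / ∏ j ∈ Finset.univ.erase i, (xv i - xv j) := by
  classical
  set F : Fin n → Kn n := fun i => RatFunc.eval (RingHom.id (Kn n)) (xv i) f with hF
  have hFeq : ∀ (w : Equiv.Perm (Fin n)) (j : Fin n), Phi w (F j) = F (w j) := by
    intro w j
    simp only [hF]
    exact Phi_eval w f hnum hden j
  have main : ∀ k, k < n →
      ddChain n (F ⟨0, hn⟩ * ∏ i ∈ Finset.univ.erase (⟨0, hn⟩ : Fin n), xv i) k =
        lagA xv F (Finset.univ.filter (fun j : Fin n => (j : ℕ) ≤ k)) *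
          ∏ j ∈ Finset.univ.filter (fun j : Fin n => k < (j : ℕ)), xv j := by
    intro k
    induction k with
    | zero =>
      intro hk
      have h1 : Finset.univ.filter (fun j : Fin n => (j : ℕ) ≤ 0) = {(⟨0, hn⟩ : Fin n)} := by
        ext j
        simp [Fin.ext_iff, Nat.le_zero]
      have h2 : Finset.univ.filter (fun j : Fin n => 0 < (j : ℕ)) =
          Finset.univ.erase (⟨0, hn⟩ : Fin n) := by
        ext j
        simp [Fin.ext_iff, Nat.pos_iff_ne_zero]
      rw [ddChain, h1, h2, lagA]
      simp
    | succ k ih =>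
      intro hk
      have hk' : k < n := Nat.lt_of_succ_lt hk
      rw [ddChain, ih hk', ddOp_eq k hk]
      set a : Fin n := ⟨k, Nat.lt_of_succ_lt hk⟩ with ha'
      set b : Fin n := ⟨k + 1, hk⟩ with hb'
      have hab : a ≠ b := by simp [ha', hb', Fin.ext_iff]
      set T : Finset (Fin n) := Finset.univ.filter (fun j : Fin n => (j : ℕ) < k) with hT
      set U : Finset (Fin n) := Finset.univ.filter (fun j : Fin n => k + 1 < (j : ℕ)) with hU
      have haT : a ∉ T := by simp [hT, ha']
      have hbT : b ∉ T := by simp [hT, hb']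
      have hbU : b ∉ U := by simp [hU, hb']
      have haU : a ∉ U := by simp [hU, ha']
      have hSk : Finset.univ.filter (fun j : Fin n => (j : ℕ) ≤ k) = insert a T := by
        ext j
        simp only [Finset.mem_filter, Finset.mem_univ, true_and, Finset.mem_insert, hT, ha',
          Fin.ext_iff]
        omega
      have hSk1 : Finset.univ.filter (fun j : Fin n => (j : ℕ) ≤ k + 1) =
          insert a (insert b T) := by
        ext j
        simp only [Finset.mem_filter, Finset.mem_univ, true_and, Finset.mem_insert, hT, ha', hb',
          Fin.ext_iff]
        omega
      have hPk : Finset.univ.filter (fun j : Fin n => k < (j : ℕ)) = insert b U := by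
        ext j
        simp only [Finset.mem_filter, Finset.mem_univ, true_and, Finset.mem_insert, hU, hb',
          Fin.ext_iff]
        omega
      have hsT : ∀ j ∈ T, Equiv.swap a b j = j := fun j hj =>
        Equiv.swap_apply_of_ne_of_ne (fun e => haT (e ▸ hj)) (fun e => hbT (e ▸ hj))
      have hsU : ∀ j ∈ U, Equiv.swap a b j = j := fun j hj =>
        Equiv.swap_apply_of_ne_of_ne (fun e => haU (e ▸ hj)) (fun e => hbU (e ▸ hj))
      rw [hSk, hSk1, hPk, Finset.prod_insert hbU]
      have h1 : Phi (Equiv.swap a b) (lagA xv F (insert a T)) = lagA xv F (insert b T) := by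
        rw [lagA_map xv F (Phi (Equiv.swap a b)) (Equiv.swap a b) (Equiv.injective _)
          (fun j => Phi_xv _ j) (hFeq _), Finset.image_insert, Equiv.swap_apply_left]
        have himg : T.image (Equiv.swap a b) = T :=
          (Finset.image_congr fun j hj => hsT j hj).trans Finset.image_id
        rw [himg]
      have h2 : Phi (Equiv.swap a b) (xv b * ∏ j ∈ U, xv j) = xv a * ∏ j ∈ U, xv j := by
        rw [map_mul, map_prod, Phi_xv, Equiv.swap_apply_right]
        congr 1
        refine Finset.prod_congr rfl fun j hj => ?_
        rw [Phi_xv, hsU j hj]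
      rw [map_mul, h1, h2]
      have hxab : xv a ≠ xv b := fun e => hab (xv_injective e)
      have hxa : ∀ i ∈ T, xv i ≠ xv a := fun i hi e => haT ((xv_injective e) ▸ hi)
      have hxb : ∀ i ∈ T, xv i ≠ xv b := fun i hi e => hbT ((xv_injective e) ▸ hi)
      rw [← lagA_key xv F T a b haT hbT hab hxab hxa hxb, div_mul_eq_mul_div]
      congr 1
      ring
  have h3 : Finset.univ.filter (fun j : Fin n => (j : ℕ) ≤ n - 1) = Finset.univ := by
    ext j
    have := j.isLt
    simp only [Finset.mem_filter, Finset.mem_univ, true_and, iff_true]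
    omega
  have h4 : Finset.univ.filter (fun j : Fin n => n - 1 < (j : ℕ)) = (∅ : Finset (Fin n)) := by
    ext j
    have := j.isLt
    simp only [Finset.mem_filter, Finset.mem_univ, true_and, Finset.notMem_empty, iff_false]
    omega
  rw [main (n - 1) (by omega), h3, h4, Finset.prod_empty, mul_one, lagA]


end Gaudin
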